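/- If ξ has the Max-U-Exp(a, λ) distribution, then its variance is Var(ξ) = a²/12 - (1/λ²)(1 + e^{-λa}) + (4/(aλ³))(1 - e^{-λa}) - (1/(a²λ⁴))(1 - e^{-λa})². -/

import Mathlib

open MeasureTheory Set Filter

/-- The Max-U-Exp(a, λ) probability density function. -/
noncomputable def maxUExpPDF (a lam x : ℝ) : ℝ :=
  if x ≤ 0 then 0
  else if x ≤ a then (1 / a) * (1 - Real.exp (-lam * x) + lam * x * Real.exp (-lam * x))
  else lam * Real.exp (-lam * x)

lemma hasDerivAt_expNeg (lam x : ℝ) :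
    HasDerivAt (fun y => Real.exp (-lam * y)) (-lam * Real.exp (-lam * x)) x := by
  have h := ((hasDerivAt_id x).const_mul (-lam)).exp
  simpa [mul_comm] using h

lemma cubic_exp_deriv (lam c0 c1 c2 c3 x : ℝ) :
    HasDerivAt (fun y => (c0 + c1*y + c2*y^2 + c3*y^3) * Real.exp (-lam*y))
      ((c1 + 2*c2*x + 3*c3*x^2) * Real.exp (-lam*x)
        + (c0 + c1*x + c2*x^2 + c3*x^3) * (-lam * Real.exp (-lam*x))) x := by
  have hp : HasDerivAt (fun y : ℝ => c0 + c1*y + c2*y^2 + c3*y^3)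
      (c1 + 2*c2*x + 3*c3*x^2) x := by
    have h1 : HasDerivAt (fun y : ℝ => y) 1 x := hasDerivAt_id x
    have h2 := hasDerivAt_pow 2 x
    have h3 := hasDerivAt_pow 3 x
    have h := ((h1.const_mul c1).add ((h2.const_mul c2).add (h3.const_mul c3))).const_add c0
    refine (h.congr_deriv ?_).congr_of_eventuallyEq (Filter.Eventually.of_forall fun y => ?_)
    · push_cast; ring
    · simp only [Pi.add_apply]; ring
  exact hp.mul (hasDerivAt_expNeg lam x)

lemma tendsto_pow_exp (lam : ℝ) (hlam : 0 < lam) (n : ℕ) :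
    Tendsto (fun x : ℝ => x ^ n * Real.exp (-lam * x)) atTop (nhds 0) := by
  have h := (Real.tendsto_pow_mul_exp_neg_atTop_nhds_zero n).comp
    (Filter.Tendsto.const_mul_atTop hlam tendsto_id)
  have heq : (fun x : ℝ => x ^ n * Real.exp (-lam * x))
      = fun x => (1/lam^n) * ((lam * x)^n * Real.exp (-(lam * x))) := by
    funext x
    have hl := hlam.ne'
    rw [mul_pow]
    field_simp
  rw [heq]
  have := h.const_mul (1/lam^n)
  simpa using this

theorem maxUExp_variance (a lam : ℝ) (ha : 0 < a) (hlam : 0 < lam) :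
    (∫ x in Set.Ioi (0 : ℝ), x ^ 2 * maxUExpPDF a lam x)
      - (∫ x in Set.Ioi (0 : ℝ), x * maxUExpPDF a lam x) ^ 2 =
      a ^ 2 / 12 - (1 / lam ^ 2) * (1 + Real.exp (-lam * a))
        + (4 / (a * lam ^ 3)) * (1 - Real.exp (-lam * a))
        - (1 / (a ^ 2 * lam ^ 4)) * (1 - Real.exp (-lam * a)) ^ 2 := by
  have ha' : a ≠ 0 := ha.ne'
  have hl' : lam ≠ 0 := hlam.ne'
  have t0 := tendsto_pow_exp lam hlam 0
  have t1 := tendsto_pow_exp lam hlam 1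
  have t2 := tendsto_pow_exp lam hlam 2
  have t3 := tendsto_pow_exp lam hlam 3
  -- ============ FIRST MOMENT ============
  -- antiderivatives
  set F1 : ℝ → ℝ := fun y => (1/(2*a)) * y^2
      + (1/a) * ((-(1/lam^2) + (-(1/lam))*y + (-1)*y^2 + 0*y^3) * Real.exp (-lam*y)) with hF1
  set G1 : ℝ → ℝ := fun y => (-(1/lam) + (-1)*y + 0*y^2 + 0*y^3) * Real.exp (-lam*y) with hG1
  have hIoc_eq1 : EqOn (fun x => x * maxUExpPDF a lam x)
      (fun x => x * ((1/a) * (1 - Real.exp (-lam*x) + lam * x * Real.exp (-lam*x)))) (Ioc 0 a) := by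
    intro x hx
    simp only [maxUExpPDF, if_neg (not_le.mpr hx.1), if_pos hx.2]
  have hIoi_eq1 : EqOn (fun x => x * maxUExpPDF a lam x)
      (fun x => x * (lam * Real.exp (-lam*x))) (Ioi a) := by
    intro x hx
    simp only [maxUExpPDF, if_neg (not_le.mpr (ha.trans hx)), if_neg (not_le.mpr (mem_Ioi.mp hx))]
  have hF1deriv : ∀ x ∈ uIcc (0:ℝ) a, HasDerivAt F1
      (x * ((1/a) * (1 - Real.exp (-lam*x) + lam * x * Real.exp (-lam*x)))) x := by
    intro x _
    have h := ((hasDerivAt_pow 2 x).const_mul (1/(2*a))).add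
      ((cubic_exp_deriv lam (-(1/lam^2)) (-(1/lam)) (-1) 0 x).const_mul (1/a))
    refine h.congr_deriv ?_
    push_cast
    field_simp
    ring
  have hcont1 : Continuous (fun x : ℝ => x * ((1/a) * (1 - Real.exp (-lam*x) + lam * x * Real.exp (-lam*x)))) := by
    fun_prop
  have hint1 : IntervalIntegrable (fun x : ℝ => x * ((1/a) * (1 - Real.exp (-lam*x) + lam * x * Real.exp (-lam*x)))) volume 0 a :=
    hcont1.intervalIntegrable 0 a
  have hIoc_val1 : ∫ x in Ioc (0:ℝ) a, x * ((1/a) * (1 - Real.exp (-lam*x) + lam * x * Real.exp (-lam*x))) = F1 a - F1 0 := by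
    rw [← intervalIntegral.integral_of_le ha.le]
    exact intervalIntegral.integral_eq_sub_of_hasDerivAt hF1deriv hint1
  have hG1deriv : ∀ x ∈ Ioi a, HasDerivAt G1 (x * (lam * Real.exp (-lam*x))) x := by
    intro x _
    have h := cubic_exp_deriv lam (-(1/lam)) (-1) 0 0 x
    convert h using 1
    field_simp
    ring
  have hG1cont : ContinuousWithinAt G1 (Ici a) a := by
    apply Continuous.continuousWithinAt
    fun_prop
  have hG1pos : ∀ x ∈ Ioi a, 0 ≤ x * (lam * Real.exp (-lam*x)) := by
    intro x hx
    have hx0 : 0 < x := ha.trans hx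
    positivity
  have hG1tend : Tendsto G1 atTop (nhds 0) := by
    have h := (t0.const_mul (-(1/lam))).add (t1.const_mul (-1))
    have heq : G1 = fun x : ℝ => (-(1/lam)) * (x^0 * Real.exp (-lam*x)) + (-1) * (x^1 * Real.exp (-lam*x)) := by
      funext y; simp only [hG1]; ring
    rw [heq]
    simpa using h
  have hIoi_val1 : ∫ x in Ioi a, x * (lam * Real.exp (-lam*x)) = 0 - G1 a :=
    integral_Ioi_of_hasDerivAt_of_nonneg hG1cont hG1deriv hG1pos hG1tend
  have hIoiInt1 : IntegrableOn (fun x => x * (lam * Real.exp (-lam*x))) (Ioi a) volume :=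
    integrableOn_Ioi_deriv_of_nonneg hG1cont hG1deriv hG1pos hG1tend
  have hsplit1 : (∫ x in Set.Ioi (0:ℝ), x * maxUExpPDF a lam x)
      = (∫ x in Ioc (0:ℝ) a, x * maxUExpPDF a lam x) + ∫ x in Ioi a, x * maxUExpPDF a lam x := by
    rw [← Ioc_union_Ioi_eq_Ioi ha.le]
    exact setIntegral_union (Ioc_disjoint_Ioi le_rfl) measurableSet_Ioi
      (hint1.1.congr_fun hIoc_eq1.symm measurableSet_Ioc)
      (hIoiInt1.congr_fun hIoi_eq1.symm measurableSet_Ioi)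
  have hmean : (∫ x in Set.Ioi (0:ℝ), x * maxUExpPDF a lam x)
      = a/2 + 1/(a*lam^2) - (1/(a*lam^2)) * Real.exp (-lam*a) := by
    rw [hsplit1, setIntegral_congr_fun measurableSet_Ioc hIoc_eq1,
      setIntegral_congr_fun measurableSet_Ioi hIoi_eq1, hIoc_val1, hIoi_val1]
    simp only [hF1, hG1, mul_zero, neg_mul, neg_zero, Real.exp_zero]
    field_simp
    ring
  -- ============ SECOND MOMENT ============
  set F2 : ℝ → ℝ := fun y => (1/(3*a)) * y^3
      + (1/a) * ((-(4/lam^3) + (-(4/lam^2))*y + (-(2/lam))*y^2 + (-1)*y^3) * Real.exp (-lam*y)) with hF2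
  set G2 : ℝ → ℝ := fun y => (-(2/lam^2) + (-(2/lam))*y + (-1)*y^2 + 0*y^3) * Real.exp (-lam*y) with hG2
  have hIoc_eq2 : EqOn (fun x => x^2 * maxUExpPDF a lam x)
      (fun x => x^2 * ((1/a) * (1 - Real.exp (-lam*x) + lam * x * Real.exp (-lam*x)))) (Ioc 0 a) := by
    intro x hx
    simp only [maxUExpPDF, if_neg (not_le.mpr hx.1), if_pos hx.2]
  have hIoi_eq2 : EqOn (fun x => x^2 * maxUExpPDF a lam x)
      (fun x => x^2 * (lam * Real.exp (-lam*x))) (Ioi a) := by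
    intro x hx
    simp only [maxUExpPDF, if_neg (not_le.mpr (ha.trans hx)), if_neg (not_le.mpr (mem_Ioi.mp hx))]
  have hF2deriv : ∀ x ∈ uIcc (0:ℝ) a, HasDerivAt F2
      (x^2 * ((1/a) * (1 - Real.exp (-lam*x) + lam * x * Real.exp (-lam*x)))) x := by
    intro x _
    have h := ((hasDerivAt_pow 3 x).const_mul (1/(3*a))).add
      ((cubic_exp_deriv lam (-(4/lam^3)) (-(4/lam^2)) (-(2/lam)) (-1) x).const_mul (1/a))
    refine h.congr_deriv ?_
    push_cast
    field_simp
    ring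
  have hcont2 : Continuous (fun x : ℝ => x^2 * ((1/a) * (1 - Real.exp (-lam*x) + lam * x * Real.exp (-lam*x)))) := by
    fun_prop
  have hint2 : IntervalIntegrable (fun x : ℝ => x^2 * ((1/a) * (1 - Real.exp (-lam*x) + lam * x * Real.exp (-lam*x)))) volume 0 a :=
    hcont2.intervalIntegrable 0 a
  have hIoc_val2 : ∫ x in Ioc (0:ℝ) a, x^2 * ((1/a) * (1 - Real.exp (-lam*x) + lam * x * Real.exp (-lam*x))) = F2 a - F2 0 := by
    rw [← intervalIntegral.integral_of_le ha.le]
    exact intervalIntegral.integral_eq_sub_of_hasDerivAt hF2deriv hint2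
  have hG2deriv : ∀ x ∈ Ioi a, HasDerivAt G2 (x^2 * (lam * Real.exp (-lam*x))) x := by
    intro x _
    have h := cubic_exp_deriv lam (-(2/lam^2)) (-(2/lam)) (-1) 0 x
    convert h using 1
    field_simp
    ring
  have hG2cont : ContinuousWithinAt G2 (Ici a) a := by
    apply Continuous.continuousWithinAt
    fun_prop
  have hG2pos : ∀ x ∈ Ioi a, 0 ≤ x^2 * (lam * Real.exp (-lam*x)) := by
    intro x hx
    positivity
  have hG2tend : Tendsto G2 atTop (nhds 0) := by
    have h := ((t0.const_mul (-(2/lam^2))).add (t1.const_mul (-(2/lam)))).add (t2.const_mul (-1))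
    have heq : G2 = fun x : ℝ => ((-(2/lam^2)) * (x^0 * Real.exp (-lam*x)) + (-(2/lam)) * (x^1 * Real.exp (-lam*x))) + (-1) * (x^2 * Real.exp (-lam*x)) := by
      funext y; simp only [hG2]; ring
    rw [heq]
    simpa using h
  have hIoi_val2 : ∫ x in Ioi a, x^2 * (lam * Real.exp (-lam*x)) = 0 - G2 a :=
    integral_Ioi_of_hasDerivAt_of_nonneg hG2cont hG2deriv hG2pos hG2tend
  have hIoiInt2 : IntegrableOn (fun x => x^2 * (lam * Real.exp (-lam*x))) (Ioi a) volume :=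
    integrableOn_Ioi_deriv_of_nonneg hG2cont hG2deriv hG2pos hG2tend
  have hsplit2 : (∫ x in Set.Ioi (0:ℝ), x^2 * maxUExpPDF a lam x)
      = (∫ x in Ioc (0:ℝ) a, x^2 * maxUExpPDF a lam x) + ∫ x in Ioi a, x^2 * maxUExpPDF a lam x := by
    rw [← Ioc_union_Ioi_eq_Ioi ha.le]
    exact setIntegral_union (Ioc_disjoint_Ioi le_rfl) measurableSet_Ioi
      (hint2.1.congr_fun hIoc_eq2.symm measurableSet_Ioc)
      (hIoiInt2.congr_fun hIoi_eq2.symm measurableSet_Ioi)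
  have hsq : (∫ x in Set.Ioi (0:ℝ), x^2 * maxUExpPDF a lam x)
      = a^2/3 + 4/(a*lam^3) - (2/lam^2 + 4/(a*lam^3)) * Real.exp (-lam*a) := by
    rw [hsplit2, setIntegral_congr_fun measurableSet_Ioc hIoc_eq2,
      setIntegral_congr_fun measurableSet_Ioi hIoi_eq2, hIoc_val2, hIoi_val2]
    simp only [hF2, hG2, mul_zero, neg_mul, neg_zero, Real.exp_zero]
    field_simp
    ring
  rw [hsq, hmean]
  field_simp
  ring
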